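/- The function ψ₂ : ℝ → ℝ defined by ψ₂(u) = e^{−|u|} for |u| ≤ 1, ψ₂(u) = e^{−1}(2 − |u|) for 1 < |u| ≤ 2, and ψ₂(u) = 0 for |u| > 2, is a positive definite function: for every positive integer n, all x₁,…,x_n ∈ ℝ and all c₁,…,c_n ∈ ℝ, Σ_{i=1}^n Σ_{j=1}^n c_i c_j ψ₂(x_i − x_j) ≥ 0. -/

import Mathlib

set_option maxHeartbeats 1000000

open Set MeasureTheory

/-- The triangle kernel `(t - |a-b|)₊` is the overlap of two intervals. -/
lemma tri_psd (t : ℝ) (n : ℕ) (x c : Fin n → ℝ) :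
    0 ≤ ∑ i, ∑ j, c i * c j * max (t - |x i - x j|) 0 := by
  set f : Fin n → ℝ → ℝ := fun i s => (Set.Ioc (x i - t) (x i)).indicator (fun _ => c i) s
    with hf
  have hprod : ∀ i j, (fun s => f i s * f j s)
      = (Set.Ioc (max (x i - t) (x j - t)) (min (x i) (x j))).indicator
          (fun _ => c i * c j) := by
    intro i j
    funext s
    rw [← Set.Ioc_inter_Ioc, Set.inter_indicator_mul]
  have hint : ∀ i j, Integrable (fun s => f i s * f j s) := by
    intro i j
    rw [hprod]
    exact (integrable_indicator_iff measurableSet_Ioc).2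
      (integrableOn_const (by simp [Real.volume_Ioc, ENNReal.ofReal_lt_top]))
  have hval : ∀ i j, ∫ s, f i s * f j s = c i * c j * max (t - |x i - x j|) 0 := by
    intro i j
    rw [hprod, MeasureTheory.integral_indicator_const _ measurableSet_Ioc,
      Real.volume_real_Ioc, smul_eq_mul, mul_comm]
    congr 2
    rw [max_sub_sub_right]
    rcases le_total (x i) (x j) with h | h
    · rw [abs_sub_comm]
      rw [abs_of_nonneg (by linarith), min_eq_left h, max_eq_right h]; ring
    · rw [abs_of_nonneg (by linarith), min_eq_right h, max_eq_left h]; ring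
  calc (0:ℝ) ≤ ∫ s, (∑ i, f i s)^2 := integral_nonneg fun s => sq_nonneg _
    _ = ∫ s, ∑ i, ∑ j, f i s * f j s := by
        congr 1; funext s; rw [sq, Finset.sum_mul_sum]
    _ = ∑ i, ∑ j, ∫ s, f i s * f j s := by
        rw [MeasureTheory.integral_finset_sum _ fun i _ =>
          integrable_finset_sum _ fun j _ => hint i j]
        exact Finset.sum_congr rfl fun i _ =>
          MeasureTheory.integral_finset_sum _ fun j _ => hint i j
    _ = ∑ i, ∑ j, c i * c j * max (t - |x i - x j|) 0 := by
        simp only [hval]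


/-- Esseen's tangent-line truncation of `e^{-|u|}`:
`ψ₂(u) = e^{-|u|}` for `|u| ≤ 1`, `ψ₂(u) = e⁻¹ (2 - |u|)` for `1 < |u| ≤ 2`,
and `ψ₂(u) = 0` for `|u| > 2`. -/
noncomputable def psi₂ (u : ℝ) : ℝ :=
  if |u| ≤ 1 then Real.exp (-|u|)
  else if |u| ≤ 2 then Real.exp (-1) * (2 - |u|)
  else 0

/-- The mixture representation of `psi₂`. -/
lemma psi2_eq (u : ℝ) :
    psi₂ u
    = (∫ s in (0:ℝ)..1, max (s - |u|) 0 * Real.exp (-s))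
        + Real.exp (-1) * max (2 - |u|) 0 := by
  unfold psi₂
  set a := |u| with ha
  have ha0 : 0 ≤ a := abs_nonneg u
  by_cases h1 : a ≤ 1
  · rw [if_pos h1]
    have hzero : ∫ s in (0:ℝ)..a, max (s - a) 0 * Real.exp (-s) = 0 := by
      rw [intervalIntegral.integral_congr (g := fun _ => 0)]
      · simp
      · intro s hs
        rw [Set.uIcc_of_le ha0] at hs
        simp only [max_eq_right (by linarith [hs.2] : s - a ≤ 0), zero_mul]
    have hmain : ∫ s in a..(1:ℝ), max (s - a) 0 * Real.exp (-s)
        = Real.exp (-a) - (2 - a) * Real.exp (-1) := by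
      rw [intervalIntegral.integral_congr (g := fun s => (s - a) * Real.exp (-s))]
      · have : ∀ s ∈ Set.uIcc a (1:ℝ), HasDerivAt (fun s => -(s - a + 1) * Real.exp (-s))
            ((s - a) * Real.exp (-s)) s := by
          intro s _
          have h1 : HasDerivAt (fun s : ℝ => -(s - a + 1)) (-1) s := by
            exact (((hasDerivAt_id s).sub_const a).add_const 1).neg
          have h2 : HasDerivAt (fun s : ℝ => Real.exp (-s)) (-Real.exp (-s)) s := by
            simpa using (hasDerivAt_neg' s).exp
          have := h1.mul h2
          exact this.congr_deriv (by ring)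
        rw [intervalIntegral.integral_eq_sub_of_hasDerivAt
          (fun s hs => this s hs)]
        · ring_nf
        · apply Continuous.intervalIntegrable
          continuity
      · intro s hs
        rw [Set.uIcc_of_le h1] at hs
        have hsa : (0:ℝ) ≤ s - a := by linarith [hs.1]
        simp [max_eq_left hsa]
    have hsplit : ∫ s in (0:ℝ)..1, max (s - a) 0 * Real.exp (-s)
        = (∫ s in (0:ℝ)..a, max (s - a) 0 * Real.exp (-s))
          + ∫ s in a..(1:ℝ), max (s - a) 0 * Real.exp (-s) := by
      rw [intervalIntegral.integral_add_adjacent_intervals] <;>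
        · apply Continuous.intervalIntegrable
          exact ((continuous_id.sub continuous_const).max continuous_const).mul
            (Real.continuous_exp.comp continuous_neg)
    rw [hsplit, hzero, hmain, max_eq_left (by linarith)]
    ring
  · push_neg at h1
    have hzero : ∫ s in (0:ℝ)..1, max (s - a) 0 * Real.exp (-s) = 0 := by
      rw [intervalIntegral.integral_congr (g := fun _ => 0)]
      · simp
      · intro s hs
        rw [Set.uIcc_of_le (by norm_num : (0:ℝ) ≤ 1)] at hs
        simp only [max_eq_right (by linarith [hs.2] : s - a ≤ 0), zero_mul]
    rw [hzero, if_neg (not_le.2 h1), zero_add]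
    by_cases h2 : a ≤ 2
    · rw [if_pos h2, max_eq_left (by linarith)]
    · push_neg at h2
      rw [if_neg (not_le.2 h2), max_eq_right (by linarith)]
      ring

/-- Esseen's construction is positive definite. -/
theorem psi₂_posDef :
    ∀ n : ℕ, 0 < n → ∀ x c : Fin n → ℝ,
      0 ≤ ∑ i, ∑ j, c i * c j * psi₂ (x i - x j) := by
  intro n _ x c
  have hψ : ∀ i j : Fin n, c i * c j * psi₂ (x i - x j)
      = c i * c j * (∫ s in (0:ℝ)..1, max (s - |x i - x j|) 0 * Real.exp (-s))
        + Real.exp (-1) * (c i * c j * max (2 - |x i - x j|) 0) := by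
    intro i j; rw [psi2_eq]; ring
  simp only [hψ, Finset.sum_add_distrib, ← Finset.mul_sum]
  have h2 : 0 ≤ Real.exp (-1) * ∑ i, ∑ j, c i * c j * max (2 - |x i - x j|) 0 :=
    mul_nonneg (Real.exp_nonneg _) (tri_psd 2 n x c)
  have hcont : ∀ i j : Fin n, Continuous
      (fun s : ℝ => c i * c j * (max (s - |x i - x j|) 0 * Real.exp (-s))) := by
    intro i j
    exact continuous_const.mul (((continuous_id.sub continuous_const).max
      continuous_const).mul (Real.continuous_exp.comp continuous_neg))
  have h1 : 0 ≤ ∑ i, ∑ j,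
      c i * c j * ∫ s in (0:ℝ)..1, max (s - |x i - x j|) 0 * Real.exp (-s) := by
    have hswap : (∑ i, ∑ j,
        c i * c j * ∫ s in (0:ℝ)..1, max (s - |x i - x j|) 0 * Real.exp (-s))
        = ∫ s in (0:ℝ)..1, ∑ i, ∑ j,
            c i * c j * (max (s - |x i - x j|) 0 * Real.exp (-s)) := by
      calc (∑ i, ∑ j,
          c i * c j * ∫ s in (0:ℝ)..1, max (s - |x i - x j|) 0 * Real.exp (-s))
          = ∑ i, ∑ j, ∫ s in (0:ℝ)..1,
              c i * c j * (max (s - |x i - x j|) 0 * Real.exp (-s)) :=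
            Finset.sum_congr rfl fun i _ => Finset.sum_congr rfl fun j _ =>
              (intervalIntegral.integral_const_mul _ _).symm
        _ = ∑ i, ∫ s in (0:ℝ)..1, ∑ j,
              c i * c j * (max (s - |x i - x j|) 0 * Real.exp (-s)) :=
            Finset.sum_congr rfl fun i _ =>
              (intervalIntegral.integral_finset_sum
                (f := fun j s => c i * c j * (max (s - |x i - x j|) 0 * Real.exp (-s)))
                fun j _ => (hcont i j).intervalIntegrable 0 1).symm
        _ = ∫ s in (0:ℝ)..1, ∑ i, ∑ j,
              c i * c j * (max (s - |x i - x j|) 0 * Real.exp (-s)) :=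
            (intervalIntegral.integral_finset_sum
              (f := fun i s => ∑ j, c i * c j * (max (s - |x i - x j|) 0 * Real.exp (-s)))
              fun i _ => (continuous_finset_sum _ fun j _ =>
                hcont i j).intervalIntegrable 0 1).symm
    rw [hswap]
    apply intervalIntegral.integral_nonneg (by norm_num : (0:ℝ) ≤ 1)
    intro s _
    have h := tri_psd s n x c
    have heq : (∑ i, ∑ j, c i * c j * (max (s - |x i - x j|) 0 * Real.exp (-s)))
        = Real.exp (-s) * ∑ i, ∑ j, c i * c j * max (s - |x i - x j|) 0 := by
      simp only [Finset.mul_sum]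
      exact Finset.sum_congr rfl fun i _ => Finset.sum_congr rfl fun j _ => by ring
    rw [heq]
    exact mul_nonneg (Real.exp_nonneg _) h
  linarith
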